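/- Let P : V → V be an invertible linear map on a finite-dimensional real vector space with P-invariant decomposition V = E_s ⊕ E_u. Suppose ‖P|_{E_s}‖ ≤ ε and ‖P^{-1}|_{E_u}‖ ≤ ε for some ε with 0 < ε < 1/(2·dim V) (with respect to some fixed norms). Then there exist constants 0 < c_1 ≤ C_1, depending only on dim V and ε, such that c_1 · |det(P|_{E_u})|^{-1} ≤ |det(Id − P)|^{-1} ≤ C_1 · |det(P|_{E_u})|^{-1}. -/
import Mathlib

open Module


/-- Auxiliary: ratio lemma. -/
lemma aux_le_of_pow {d s c : ℝ} (hd : 0 ≤ d) (hs : 0 ≤ s)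
    (h : ∀ k : ℕ, d ^ (k + 1) ≤ c * s ^ (k + 1)) : d ≤ s := by
  rcases eq_or_lt_of_le hs with hs0 | hs0
  · subst hs0
    simpa using h 0
  by_contra hds
  push_neg at hds
  have hq : 1 < d / s := (one_lt_div hs0).2 hds
  obtain ⟨k, hk⟩ := pow_unbounded_of_one_lt (max c 1) hq
  rcases Nat.eq_zero_or_pos k with rfl | hk1
  · rw [pow_zero] at hk
    exact absurd (le_max_right c 1) (not_le.2 hk)
  obtain ⟨j, rfl⟩ := Nat.exists_eq_add_of_le hk1
  have h2 := h j
  have hsp : (0:ℝ) < s ^ (j + 1) := pow_pos hs0 _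
  have : (d / s) ^ (j + 1) ≤ c := by
    rw [div_pow, div_le_iff₀ hsp]
    simpa [Nat.add_comm] using h2
  have := this.trans (le_max_left c 1)
  rw [Nat.add_comm 1 j] at hk
  linarith

/-- Key: determinant bound from pointwise operator bound. -/
lemma aux_det_le {V : Type*} [NormedAddCommGroup V] [NormedSpace ℝ V]
    [FiniteDimensional ℝ V] (B : V →ₗ[ℝ] V) {r : ℝ} (hr : 0 ≤ r)
    (hB : ∀ x, ‖B x‖ ≤ r * ‖x‖) :
    |LinearMap.det B| ≤ r ^ finrank ℝ V := by
  classical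
  set n := finrank ℝ V with hn
  set b : Basis (Fin n) ℝ V := finBasis ℝ V with hb
  set K : ℝ := (∑ i, ‖LinearMap.toContinuousLinearMap (b.coord i)‖) * (∑ j, ‖b j‖) with hK
  have hK0 : 0 ≤ K := mul_nonneg (Finset.sum_nonneg fun _ _ => norm_nonneg _)
    (Finset.sum_nonneg fun _ _ => norm_nonneg _)
  set c : ℝ := (n.factorial : ℝ) * K ^ n with hc
  have key : ∀ (A : V →ₗ[ℝ] V) (t : ℝ), 0 ≤ t → (∀ x, ‖A x‖ ≤ t * ‖x‖) →
      |LinearMap.det A| ≤ c * t ^ n := by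
    intro A t ht hA
    have entry : ∀ i j, |(LinearMap.toMatrix b b A) i j| ≤ K * t := by
      intro i j
      rw [LinearMap.toMatrix_apply]
      have h1 : |(b.repr (A (b j))) i| = ‖(LinearMap.toContinuousLinearMap (b.coord i)) (A (b j))‖ := by
        simp [Basis.coord_apply]
      rw [h1]
      calc ‖(LinearMap.toContinuousLinearMap (b.coord i)) (A (b j))‖
          ≤ ‖LinearMap.toContinuousLinearMap (b.coord i)‖ * ‖A (b j)‖ :=
            (LinearMap.toContinuousLinearMap (b.coord i)).le_opNorm _
        _ ≤ ‖LinearMap.toContinuousLinearMap (b.coord i)‖ * (t * ‖b j‖) :=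
            mul_le_mul_of_nonneg_left (hA _) (norm_nonneg _)
        _ ≤ K * t := by
            rw [hK]
            have h2 : ‖LinearMap.toContinuousLinearMap (b.coord i)‖ ≤
                ∑ i', ‖LinearMap.toContinuousLinearMap (b.coord i')‖ :=
              Finset.single_le_sum (f := fun i' => ‖LinearMap.toContinuousLinearMap (b.coord i')‖)
                (fun _ _ => norm_nonneg _) (Finset.mem_univ i)
            have h3 : ‖b j‖ ≤ ∑ j', ‖b j'‖ :=
              Finset.single_le_sum (f := fun j' => ‖b j'‖)
                (fun _ _ => norm_nonneg _) (Finset.mem_univ j)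
            calc ‖LinearMap.toContinuousLinearMap (b.coord i)‖ * (t * ‖b j‖)
                ≤ (∑ i', ‖LinearMap.toContinuousLinearMap (b.coord i')‖) * (t * (∑ j', ‖b j'‖)) := by
                  apply mul_le_mul h2 (mul_le_mul_of_nonneg_left h3 ht)
                    (mul_nonneg ht (norm_nonneg _)) ((norm_nonneg _).trans h2)
              _ = _ := by ring
    have entry' : ∀ i j, AbsoluteValue.abs ((LinearMap.toMatrix b b A) i j) ≤ K * t := by
      simpa using entry
    have habs := Matrix.det_le (A := (LinearMap.toMatrix b b) A) (abv := AbsoluteValue.abs) (x := K * t) entry'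
    rw [show ((LinearMap.toMatrix b b) A).det = LinearMap.det A from LinearMap.det_toMatrix b A] at habs
    simp only [AbsoluteValue.abs_apply, Fintype.card_fin, nsmul_eq_mul] at habs
    calc |LinearMap.det A| ≤ (n.factorial : ℝ) * (K * t) ^ n := habs
      _ = c * t ^ n := by rw [hc, mul_pow]; ring
  apply aux_le_of_pow (abs_nonneg _) (pow_nonneg hr n)
  intro k
  have hpt : ∀ x, ‖(B ^ (k + 1)) x‖ ≤ r ^ (k + 1) * ‖x‖ := by
    intro x
    induction k with
    | zero => simpa using hB x
    | succ j ih =>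
      have : (B ^ (j + 1 + 1)) x = B ((B ^ (j + 1)) x) := by
        rw [pow_succ']; rfl
      rw [this]
      calc ‖B ((B ^ (j + 1)) x)‖ ≤ r * ‖(B ^ (j + 1)) x‖ := hB _
        _ ≤ r * (r ^ (j + 1) * ‖x‖) := mul_le_mul_of_nonneg_left ih hr
        _ = r ^ (j + 1 + 1) * ‖x‖ := by ring
  have := key (B ^ (k + 1)) (r ^ (k + 1)) (pow_nonneg hr _) hpt
  rw [map_pow, abs_pow] at this
  calc |LinearMap.det B| ^ (k + 1) ≤ c * (r ^ (k + 1)) ^ n := this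
    _ = c * (r ^ n) ^ (k + 1) := by rw [← pow_mul, ← pow_mul, Nat.mul_comm]
lemma aux_det_ge {V : Type*} [NormedAddCommGroup V] [NormedSpace ℝ V]
    [FiniteDimensional ℝ V] (B : V →ₗ[ℝ] V) {s : ℝ} (hs : 0 < s)
    (hB : ∀ x, s * ‖x‖ ≤ ‖B x‖) :
    s ^ finrank ℝ V ≤ |LinearMap.det B| := by
  have hinj : Function.Injective B := by
    rw [← LinearMap.ker_eq_bot, LinearMap.ker_eq_bot']
    intro x hx
    have h1 := hB x
    rw [hx, norm_zero] at h1
    have h2 : ‖x‖ ≤ 0 := by nlinarith [norm_nonneg x]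
    simpa [norm_le_zero_iff] using h2
  have hsurj : Function.Surjective B := LinearMap.injective_iff_surjective.mp hinj
  set e := LinearEquiv.ofBijective B ⟨hinj, hsurj⟩ with he
  have hBe : ∀ x, e x = B x := fun _ => rfl
  have hinv : ∀ y, ‖(e.symm : V →ₗ[ℝ] V) y‖ ≤ s⁻¹ * ‖y‖ := by
    intro y
    have h2 : B (e.symm y) = y := by rw [← hBe]; exact e.apply_symm_apply y
    have h1 := hB (e.symm y)
    rw [h2] at h1
    have h3 : ‖e.symm y‖ ≤ ‖y‖ / s := (le_div_iff₀' hs).2 h1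
    simpa [div_eq_inv_mul] using h3
  have hle := aux_det_le (e.symm : V →ₗ[ℝ] V) (by positivity) hinv
  have hmul : LinearMap.det B * LinearMap.det (e.symm : V →ₗ[ℝ] V) = 1 := by
    rw [← LinearMap.det_comp]
    have hco : B ∘ₗ (e.symm : V →ₗ[ℝ] V) = LinearMap.id := by
      ext y
      simp only [LinearMap.comp_apply, LinearEquiv.coe_coe, LinearMap.id_apply]
      rw [← hBe]
      exact e.apply_symm_apply y
    rw [hco, LinearMap.det_id]
  have habs : |LinearMap.det B| * |LinearMap.det (e.symm : V →ₗ[ℝ] V)| = 1 := by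
    rw [← abs_mul, hmul, abs_one]
  have hne : |LinearMap.det (e.symm : V →ₗ[ℝ] V)| ≠ 0 := by
    intro h; rw [h, mul_zero] at habs; exact one_ne_zero habs.symm
  have hpos : 0 < |LinearMap.det (e.symm : V →ₗ[ℝ] V)| := (abs_nonneg _).lt_of_ne (Ne.symm hne)
  have hdetB : |LinearMap.det B| = |LinearMap.det (e.symm : V →ₗ[ℝ] V)|⁻¹ :=
    eq_inv_of_mul_eq_one_left (mul_comm (|LinearMap.det B|) _ ▸ habs)
  rw [hdetB, ← inv_inv (s ^ finrank ℝ V)]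
  apply inv_anti₀ hpos
  exact hle.trans_eq (by rw [inv_pow])


lemma aux_det_prodMap {M₁ M₂ : Type*} [AddCommGroup M₁] [Module ℝ M₁] [FiniteDimensional ℝ M₁]
    [AddCommGroup M₂] [Module ℝ M₂] [FiniteDimensional ℝ M₂]
    (f : M₁ →ₗ[ℝ] M₁) (g : M₂ →ₗ[ℝ] M₂) :
    LinearMap.det (f.prodMap g) = LinearMap.det f * LinearMap.det g := by
  classical
  let b₁ := finBasis ℝ M₁
  let b₂ := finBasis ℝ M₂
  rw [← LinearMap.det_toMatrix (b₁.prod b₂), LinearMap.toMatrix_prodMap b₁ b₂ f g,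
    Matrix.det_fromBlocks_zero₂₁, LinearMap.det_toMatrix, LinearMap.det_toMatrix]

lemma aux_det_decomp {V : Type*} [AddCommGroup V] [Module ℝ V] [FiniteDimensional ℝ V]
    {Es Eu : Submodule ℝ V} (h : IsCompl Es Eu) (f : V →ₗ[ℝ] V)
    (hs : ∀ x ∈ Es, f x ∈ Es) (hu : ∀ x ∈ Eu, f x ∈ Eu) :
    LinearMap.det f = LinearMap.det (f.restrict hs) * LinearMap.det (f.restrict hu) := by
  set e := Submodule.prodEquivOfIsCompl Es Eu h with he
  have happ : ∀ p : ↥Es × ↥Eu, e p = (p.1 : V) + (p.2 : V) := fun p => rfl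
  have hconj : f = (e : ↥Es × ↥Eu →ₗ[ℝ] V) ∘ₗ ((f.restrict hs).prodMap (f.restrict hu)) ∘ₗ
      (e.symm : V →ₗ[ℝ] (↥Es × ↥Eu)) := by
    apply LinearMap.ext
    intro x
    simp only [LinearMap.comp_apply, LinearEquiv.coe_coe]
    set p := e.symm x with hp
    have hx : x = e p := (e.apply_symm_apply x).symm
    rw [hx, happ p]
    rw [happ ((f.restrict hs).prodMap (f.restrict hu) p)]
    simp [LinearMap.restrict_apply, map_add]
  rw [← aux_det_prodMap, ← LinearMap.det_conj ((f.restrict hs).prodMap (f.restrict hu)) e, ← hconj]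

/-- If `P` is hyperbolic with contraction rate `ε < 1/(2 dim V)` on the stable
space and for the inverse on the unstable space, then `|det(Id − P)|⁻¹` is
comparable to `|det(P|_{E_u})|⁻¹`, with constants depending only on `dim V` and `ε`. -/
theorem stmt2 (n : ℕ) (ε : ℝ) (hε : 0 < ε) (hε' : ε < 1 / (2 * n)) :
    ∃ c₁ C₁ : ℝ, 0 < c₁ ∧ c₁ ≤ C₁ ∧
      ∀ (V : Type) (_ : NormedAddCommGroup V) (_ : NormedSpace ℝ V),
        FiniteDimensional ℝ V → Module.finrank ℝ V = n →
        ∀ (Es Eu : Submodule ℝ V) (P : V ≃ₗ[ℝ] V)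
          (hs : ∀ x ∈ Es, P.toLinearMap x ∈ Es)
          (hu : ∀ x ∈ Eu, P.toLinearMap x ∈ Eu),
          IsCompl Es Eu →
          (∀ x ∈ Es, ‖P.toLinearMap x‖ ≤ ε * ‖x‖) →
          (∀ x ∈ Eu, ‖P.symm.toLinearMap x‖ ≤ ε * ‖x‖) →
          c₁ * |LinearMap.det (P.toLinearMap.restrict hu)|⁻¹ ≤
              |LinearMap.det (LinearMap.id - P.toLinearMap)|⁻¹ ∧
            |LinearMap.det (LinearMap.id - P.toLinearMap)|⁻¹ ≤
              C₁ * |LinearMap.det (P.toLinearMap.restrict hu)|⁻¹ := by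
  -- ε < 1
  have hn0 : n ≠ 0 := by
    rintro rfl
    rw [Nat.cast_zero, mul_zero, div_zero] at hε'
    linarith
  have hn1 : (1:ℝ) ≤ n := by exact_mod_cast Nat.one_le_iff_ne_zero.2 hn0
  have hε1 : ε < 1 := hε'.trans_le (by rw [div_le_one (by linarith)]; linarith)
  have h1e : (0:ℝ) < 1 - ε := by linarith
  have h1e' : (0:ℝ) < 1 + ε := by linarith
  refine ⟨((1+ε)^n)⁻¹, ((1-ε)^n)⁻¹, by positivity, ?_, ?_⟩
  · apply inv_anti₀ (by positivity)
    exact pow_le_pow_left₀ (by linarith) (by linarith) n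
  intro V _ _ _ hrank Es Eu P hs hu hcompl hPs hPu
  set f : V →ₗ[ℝ] V := LinearMap.id - P.toLinearMap with hf
  set g : V →ₗ[ℝ] V := LinearMap.id - P.symm.toLinearMap with hg
  have hfapp : ∀ x : V, f x = x - P.toLinearMap x := fun x => by
    rw [hf]; simp [LinearMap.sub_apply]
  have hgapp : ∀ x : V, g x = x - P.symm.toLinearMap x := fun x => by
    rw [hg]; simp [LinearMap.sub_apply]
  -- basic maps-to facts
  have hs2 : ∀ x ∈ Es, f x ∈ Es := fun x hx => by
    rw [hfapp]; exact Es.sub_mem hx (hs x hx)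
  have hu2 : ∀ x ∈ Eu, f x ∈ Eu := fun x hx => by
    rw [hfapp]; exact Eu.sub_mem hx (hu x hx)
  -- P.symm preserves Eu
  have hPuinj : Function.Injective (P.toLinearMap.restrict hu) := by
    intro x y hxy
    have h1 := congrArg Subtype.val hxy
    simp only [LinearMap.restrict_apply] at h1
    have h2 : P (x : V) = P (y : V) := h1
    exact Subtype.ext (P.injective h2)
  have hPusurj : Function.Surjective (P.toLinearMap.restrict hu) :=
    LinearMap.injective_iff_surjective.mp hPuinj
  have husymm : ∀ x ∈ Eu, P.symm.toLinearMap x ∈ Eu := by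
    intro x hx
    obtain ⟨y, hy⟩ := hPusurj ⟨x, hx⟩
    have hy' : P.toLinearMap y = x := congrArg Subtype.val hy
    have : P.symm.toLinearMap x = (y : V) := by
      rw [← hy']; exact P.symm_apply_apply _
    rw [this]; exact y.2
  have huinv : ∀ x ∈ Eu, g x ∈ Eu := fun x hx => by
    rw [hgapp]; exact Eu.sub_mem hx (husymm x hx)
  -- decomposition of det (id - P)
  have hdet := aux_det_decomp hcompl f hs2 hu2
  -- factor the Eu part
  have hfact : f.restrict hu2 =
      -((P.toLinearMap.restrict hu) ∘ₗ (g.restrict huinv)) := by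
    apply LinearMap.ext
    intro x
    apply Subtype.ext
    have lhs : (((f.restrict hu2) x : ↥Eu) : V) = ↑x - P.toLinearMap ↑x := by
      simp [LinearMap.restrict_apply, hfapp]
    have rhs : (((-((P.toLinearMap.restrict hu) ∘ₗ (g.restrict huinv))) x : ↥Eu) : V)
        = -(P.toLinearMap ((x : V) - P.symm.toLinearMap ↑x)) := by
      simp [LinearMap.restrict_apply, hgapp]
    rw [lhs, rhs, map_sub]
    have hps : P.toLinearMap (P.symm.toLinearMap (x : V)) = (x : V) := P.apply_symm_apply ↑x
    rw [hps]
    abel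
  set m := finrank ℝ ↥Eu with hm
  set k := finrank ℝ ↥Es with hk
  have hkm : k + m = n := by
    rw [hk, hm, Submodule.finrank_add_eq_of_isCompl hcompl, hrank]
  -- determinant identities
  have hdet2 : LinearMap.det (f.restrict hu2) =
      (-1:ℝ)^m * (LinearMap.det (P.toLinearMap.restrict hu) *
        LinearMap.det (g.restrict huinv)) := by
    rw [hfact]
    rw [show -((P.toLinearMap.restrict hu) ∘ₗ (g.restrict huinv))
        = (-1:ℝ) • ((P.toLinearMap.restrict hu) ∘ₗ (g.restrict huinv))
      from (neg_one_smul ℝ _).symm]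
    rw [LinearMap.det_smul, LinearMap.det_comp]
  -- norm bounds
  set a := |LinearMap.det (f.restrict hs2)| with ha
  set q := |LinearMap.det (g.restrict huinv)| with hq
  set dP := |LinearMap.det (P.toLinearMap.restrict hu)| with hdP
  have haub : a ≤ (1+ε)^k := by
    apply aux_det_le _ (le_of_lt h1e')
    intro x
    have hb := hPs x x.2
    calc ‖(f.restrict hs2) x‖
        = ‖(x : V) - P.toLinearMap x‖ := by
          rw [Submodule.coe_norm]; simp [LinearMap.restrict_apply, hfapp]
      _ ≤ ‖(x : V)‖ + ‖P.toLinearMap (x : V)‖ := norm_sub_le _ _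
      _ ≤ ‖(x : V)‖ + ε * ‖(x : V)‖ := by linarith
      _ = (1+ε) * ‖x‖ := by rw [Submodule.coe_norm]; ring
  have halb : (1-ε)^k ≤ a := by
    apply aux_det_ge _ h1e
    intro x
    have hb := hPs x x.2
    have h3 : ‖(x:V)‖ - ‖P.toLinearMap (x:V)‖ ≤ ‖(x : V) - P.toLinearMap (x:V)‖ :=
      norm_sub_norm_le _ _
    calc (1-ε) * ‖x‖ = ‖(x:V)‖ - ε * ‖(x:V)‖ := by rw [Submodule.coe_norm]; ring
      _ ≤ ‖(x : V) - P.toLinearMap (x:V)‖ := by linarith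
      _ = ‖(f.restrict hs2) x‖ := by
          rw [Submodule.coe_norm]; simp [LinearMap.restrict_apply, hfapp]
  have hqub : q ≤ (1+ε)^m := by
    apply aux_det_le _ (le_of_lt h1e')
    intro x
    have hb := hPu x x.2
    calc ‖(g.restrict huinv) x‖
        = ‖(x : V) - P.symm.toLinearMap x‖ := by
          rw [Submodule.coe_norm]; simp [LinearMap.restrict_apply, hgapp]
      _ ≤ ‖(x : V)‖ + ‖P.symm.toLinearMap (x : V)‖ := norm_sub_le _ _
      _ ≤ ‖(x : V)‖ + ε * ‖(x : V)‖ := by linarith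
      _ = (1+ε) * ‖x‖ := by rw [Submodule.coe_norm]; ring
  have hqlb : (1-ε)^m ≤ q := by
    apply aux_det_ge _ h1e
    intro x
    have hb := hPu x x.2
    have h3 : ‖(x:V)‖ - ‖P.symm.toLinearMap (x:V)‖ ≤ ‖(x : V) - P.symm.toLinearMap (x:V)‖ :=
      norm_sub_norm_le _ _
    calc (1-ε) * ‖x‖ = ‖(x:V)‖ - ε * ‖(x:V)‖ := by rw [Submodule.coe_norm]; ring
      _ ≤ ‖(x : V) - P.symm.toLinearMap (x:V)‖ := by linarith
      _ = ‖(g.restrict huinv) x‖ := by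
          rw [Submodule.coe_norm]; simp [LinearMap.restrict_apply, hgapp]
  have hdPpos : 0 < dP := by
    rcases (abs_nonneg (LinearMap.det (P.toLinearMap.restrict hu))).lt_or_eq with h | h
    · exact h
    have h0 : LinearMap.det (P.toLinearMap.restrict hu) = 0 := abs_eq_zero.mp h.symm
    have hbot := LinearMap.bot_lt_ker_of_det_eq_zero h0
    rw [LinearMap.ker_eq_bot.2 hPuinj] at hbot
    exact absurd hbot (lt_irrefl _)
  -- assemble
  have hD : |LinearMap.det f| = dP * (a * q) := by
    rw [hdet, hdet2, abs_mul, abs_mul, abs_mul, abs_pow, abs_neg, abs_one, one_pow, one_mul]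
    rw [ha, hq, hdP]; ring
  have hapos : 0 < a := lt_of_lt_of_le (by positivity) halb
  have hqpos : 0 < q := lt_of_lt_of_le (by positivity) hqlb
  have haqub : a * q ≤ (1+ε)^n := by
    calc a * q ≤ (1+ε)^k * (1+ε)^m := by
          apply mul_le_mul haub hqub (le_of_lt hqpos) (by positivity)
      _ = (1+ε)^n := by rw [← pow_add, hkm]
  have haqlb : (1-ε)^n ≤ a * q := by
    calc (1-ε)^n = (1-ε)^k * (1-ε)^m := by rw [← pow_add, hkm]
      _ ≤ a * q := by
          apply mul_le_mul halb hqlb (by positivity) (le_of_lt hapos)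
  rw [hD, mul_inv]
  constructor
  · rw [mul_comm (((1+ε)^n)⁻¹) (dP⁻¹)]
    apply mul_le_mul_of_nonneg_left _ (by positivity)
    exact inv_anti₀ (by positivity) haqub
  · rw [mul_comm (((1-ε)^n)⁻¹) (dP⁻¹)]
    apply mul_le_mul_of_nonneg_left _ (by positivity)
    exact inv_anti₀ (by positivity) haqlb
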